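/- Let ρ_C be a d_C×d_C density matrix whose eigenvalues λ_1 ≥ λ_2 ≥ … ≥ λ_{d_C}, listed in decreasing order, satisfy Σ_{k=1}^{m} λ_k ≤ min(m, d_A)/d_A for every 1 ≤ m ≤ d_C. Then there exist a dimension d_B and a tripartite pure state ψ on systems A, B, C with local dimensions d_A, d_B, d_C such that the reduced density matrix of ψ on C equals ρ_C, the reduced density matrix on A equals the maximally mixed state I/d_A, ρ_AC = ρ_A ⊗ ρ_C, and ρ_A(j) = ρ_A for every measurement outcome j on B with P_j > 0. -/

import Mathlib

open scoped BigOperators Kronecker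
open scoped Classical ComplexOrder

lemma decomp_combine {n N : ℕ} {μ μ₁ μ₂ : Fin n → ℝ} {w₁ w₂ : ℝ}
    (hw₁ : 0 ≤ w₁) (hw₂ : 0 ≤ w₂) (hw : w₁ + w₂ = 1)
    (hμ : ∀ m, w₁ * μ₁ m + w₂ * μ₂ m = μ m)
    (h₁ : ∃ (T : ℕ) (p : Fin T → ℝ) (S : Fin T → Finset (Fin n)),
      (∀ t, 0 ≤ p t) ∧ (∑ t, p t = 1) ∧ (∀ t, (S t).card = N) ∧
      (∀ m, ∑ t, p t * (if m ∈ S t then (1:ℝ) else 0) = μ₁ m))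
    (h₂ : ∃ (T : ℕ) (p : Fin T → ℝ) (S : Fin T → Finset (Fin n)),
      (∀ t, 0 ≤ p t) ∧ (∑ t, p t = 1) ∧ (∀ t, (S t).card = N) ∧
      (∀ m, ∑ t, p t * (if m ∈ S t then (1:ℝ) else 0) = μ₂ m)) :
    ∃ (T : ℕ) (p : Fin T → ℝ) (S : Fin T → Finset (Fin n)),
      (∀ t, 0 ≤ p t) ∧ (∑ t, p t = 1) ∧ (∀ t, (S t).card = N) ∧
      (∀ m, ∑ t, p t * (if m ∈ S t then (1:ℝ) else 0) = μ m) := by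
  obtain ⟨T₁, p₁, S₁, hp₁, hs₁, hc₁, hd₁⟩ := h₁
  obtain ⟨T₂, p₂, S₂, hp₂, hs₂, hc₂, hd₂⟩ := h₂
  refine ⟨T₁ + T₂, Fin.append (fun t => w₁ * p₁ t) (fun t => w₂ * p₂ t),
    Fin.append S₁ S₂, ?_, ?_, ?_, ?_⟩
  · refine Fin.addCases ?_ ?_ <;> intro t
    · rw [Fin.append_left]; exact mul_nonneg hw₁ (hp₁ t)
    · rw [Fin.append_right]; exact mul_nonneg hw₂ (hp₂ t)
  · rw [Fin.sum_univ_add]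
    simp only [Fin.append_left, Fin.append_right, ← Finset.mul_sum, hs₁, hs₂]
    simpa using hw
  · refine Fin.addCases ?_ ?_ <;> intro t
    · rw [Fin.append_left]; exact hc₁ t
    · rw [Fin.append_right]; exact hc₂ t
  · intro m
    rw [Fin.sum_univ_add]
    simp only [Fin.append_left, Fin.append_right]
    rw [← hμ m, ← hd₁ m, ← hd₂ m, Finset.mul_sum, Finset.mul_sum]
    congr 1 <;> (apply Finset.sum_congr rfl; intro t _; ring)

lemma decomp_base {n N : ℕ} (μ : Fin n → ℝ) (hall : ∀ m, μ m = 0 ∨ μ m = 1)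
    (hsum : ∑ m, μ m = (N : ℝ)) :
    ∃ (T : ℕ) (p : Fin T → ℝ) (S : Fin T → Finset (Fin n)),
      (∀ t, 0 ≤ p t) ∧ (∑ t, p t = 1) ∧ (∀ t, (S t).card = N) ∧
      (∀ m, ∑ t, p t * (if m ∈ S t then (1:ℝ) else 0) = μ m) := by
  have hμ : ∀ m, μ m = if μ m = 1 then (1:ℝ) else 0 := by
    intro m; rcases hall m with h | h <;> simp [h]
  have hcard : ((Finset.univ.filter (fun m => μ m = 1)).card : ℝ) = (N : ℝ) := by
    rw [← Finset.sum_boole, ← hsum]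
    exact Finset.sum_congr rfl fun m _ => (hμ m).symm
  have hcard' : (Finset.univ.filter (fun m => μ m = 1)).card = N := by exact_mod_cast hcard
  exact ⟨1, fun _ => 1, fun _ => Finset.univ.filter (fun m => μ m = 1),
    fun _ => zero_le_one, by simp, fun _ => hcard', fun m => by
      simp only [Fin.sum_univ_one, one_mul, Finset.mem_filter, Finset.mem_univ, true_and]
      exact (hμ m).symm⟩

lemma decomp_main {n N : ℕ} : ∀ (k : ℕ) (μ : Fin n → ℝ),
    (Finset.univ.filter (fun m => μ m ≠ 0 ∧ μ m ≠ 1)).card ≤ k →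
    (∀ m, 0 ≤ μ m) → (∀ m, μ m ≤ 1) → (∑ m, μ m = (N : ℝ)) →
    ∃ (T : ℕ) (p : Fin T → ℝ) (S : Fin T → Finset (Fin n)),
      (∀ t, 0 ≤ p t) ∧ (∑ t, p t = 1) ∧ (∀ t, (S t).card = N) ∧
      (∀ m, ∑ t, p t * (if m ∈ S t then (1:ℝ) else 0) = μ m) := by
  intro k
  induction k with
  | zero =>
    intro μ hk h0 h1 hsum
    apply decomp_base μ _ hsum
    intro m
    by_contra h
    push_neg at h
    have hm : m ∈ Finset.univ.filter (fun m => μ m ≠ 0 ∧ μ m ≠ 1) := by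
      simp [h.1, h.2]
    have := Finset.card_pos.mpr ⟨m, hm⟩
    omega
  | succ k ih =>
    intro μ hk h0 h1 hsum
    set F := Finset.univ.filter (fun m => μ m ≠ 0 ∧ μ m ≠ 1) with hF
    by_cases hFe : F = ∅
    · apply decomp_base μ _ hsum
      intro m
      by_contra h
      push_neg at h
      have hm : m ∈ F := by simp [hF, h.1, h.2]
      simp [hFe] at hm
    obtain ⟨a, ha⟩ := Finset.nonempty_of_ne_empty hFe
    have haf : μ a ≠ 0 ∧ μ a ≠ 1 := (Finset.mem_filter.mp ha).2
    have h0a : 0 < μ a := lt_of_le_of_ne (h0 a) (Ne.symm haf.1)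
    have h1a : μ a < 1 := lt_of_le_of_ne (h1 a) haf.2
    have hb : ∃ b ∈ F, b ≠ a := by
      by_contra h
      push_neg at h
      have hall : ∀ x, x ≠ a → (μ x = 0 ∨ μ x = 1) := by
        intro x hx
        by_contra hc
        push_neg at hc
        have hm : x ∈ F := by simp [hF, hc.1, hc.2]
        exact hx (h x hm)
      have hsplit : μ a + ∑ x ∈ Finset.univ.erase a, μ x = (N : ℝ) := by
        rw [Finset.add_sum_erase _ _ (Finset.mem_univ a)]; exact hsum
      have heq : ∑ x ∈ Finset.univ.erase a, μ x
          = (((Finset.univ.erase a).filter (fun x => μ x = 1)).card : ℝ) := by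
        rw [← Finset.sum_boole]
        apply Finset.sum_congr rfl
        intro x hx
        rcases hall x (Finset.ne_of_mem_erase hx) with h' | h' <;> simp [h']
      rw [heq] at hsplit
      set c := ((Finset.univ.erase a).filter (fun x => μ x = 1)).card
      have hz : ((N : ℤ) - (c : ℤ) : ℝ) = μ a := by push_cast; linarith
      have h0z : (0 : ℤ) < (N : ℤ) - (c : ℤ) := by
        have : (0 : ℝ) < ((N : ℤ) - (c : ℤ) : ℝ) := by rw [hz]; exact h0a
        exact_mod_cast this
      have h1z : ((N : ℤ) - (c : ℤ)) < 1 := by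
        have : ((N : ℤ) - (c : ℤ) : ℝ) < 1 := by rw [hz]; exact h1a
        exact_mod_cast this
      omega
    obtain ⟨b, hbF, hba⟩ := hb
    have hbf : μ b ≠ 0 ∧ μ b ≠ 1 := (Finset.mem_filter.mp hbF).2
    have h0b : 0 < μ b := lt_of_le_of_ne (h0 b) (Ne.symm hbf.1)
    have h1b : μ b < 1 := lt_of_le_of_ne (h1 b) hbf.2
    have hab : a ≠ b := Ne.symm hba
    set ε₁ := min (1 - μ a) (μ b) with hε₁
    set ε₂ := min (μ a) (1 - μ b) with hε₂
    have hε₁0 : 0 < ε₁ := lt_min (by linarith) h0b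
    have hε₂0 : 0 < ε₂ := lt_min h0a (by linarith)
    have hε₁a : ε₁ ≤ 1 - μ a := min_le_left _ _
    have hε₁b : ε₁ ≤ μ b := min_le_right _ _
    have hε₂a : ε₂ ≤ μ a := min_le_left _ _
    have hε₂b : ε₂ ≤ 1 - μ b := min_le_right _ _
    set μP : Fin n → ℝ :=
      fun x => if x = a then μ a + ε₁ else if x = b then μ b - ε₁ else μ x with hμP
    set μM : Fin n → ℝ :=
      fun x => if x = a then μ a - ε₂ else if x = b then μ b + ε₂ else μ x with hμM
    have hPa : μP a = μ a + ε₁ := by simp [hμP]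
    have hPb : μP b = μ b - ε₁ := by simp [hμP, hba]
    have hPo : ∀ x, x ≠ a → x ≠ b → μP x = μ x := by
      intro x hxa hxb; simp [hμP, hxa, hxb]
    have hMa : μM a = μ a - ε₂ := by simp [hμM]
    have hMb : μM b = μ b + ε₂ := by simp [hμM, hba]
    have hMo : ∀ x, x ≠ a → x ≠ b → μM x = μ x := by
      intro x hxa hxb; simp [hμM, hxa, hxb]
    have keysum : ∀ (ν : Fin n → ℝ) (d : ℝ), ν a = μ a + d → ν b = μ b - d →
        (∀ x, x ≠ a → x ≠ b → ν x = μ x) → ∑ x, ν x = (N : ℝ) := by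
      intro ν d hda hdb hdo
      have hx : ∀ x, ν x = μ x + ((if x = a then d else 0) - (if x = b then d else 0)) := by
        intro x
        rcases eq_or_ne x a with rfl | hxa
        · rw [hda, if_pos rfl, if_neg hab]; ring
        rcases eq_or_ne x b with rfl | hxb
        · rw [hdb, if_neg hxa, if_pos rfl]; ring
        · rw [hdo x hxa hxb, if_neg hxa, if_neg hxb]; ring
      rw [Finset.sum_congr rfl (fun x _ => hx x), Finset.sum_add_distrib,
        Finset.sum_sub_distrib, hsum]
      simp [Finset.sum_ite_eq']
    have hsumP : ∑ x, μP x = (N : ℝ) := keysum μP ε₁ hPa hPb hPo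
    have hsumM : ∑ x, μM x = (N : ℝ) := keysum μM (-ε₂) (by rw [hMa]; ring)
      (by rw [hMb]; ring) hMo
    have h0P : ∀ x, 0 ≤ μP x := by
      intro x
      rcases eq_or_ne x a with rfl | hxa
      · rw [hPa]; linarith
      rcases eq_or_ne x b with rfl | hxb
      · rw [hPb]; linarith
      · rw [hPo x hxa hxb]; exact h0 x
    have h1P : ∀ x, μP x ≤ 1 := by
      intro x
      rcases eq_or_ne x a with rfl | hxa
      · rw [hPa]; linarith
      rcases eq_or_ne x b with rfl | hxb
      · rw [hPb]; linarith
      · rw [hPo x hxa hxb]; exact h1 x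
    have h0M : ∀ x, 0 ≤ μM x := by
      intro x
      rcases eq_or_ne x a with rfl | hxa
      · rw [hMa]; linarith
      rcases eq_or_ne x b with rfl | hxb
      · rw [hMb]; linarith
      · rw [hMo x hxa hxb]; exact h0 x
    have h1M : ∀ x, μM x ≤ 1 := by
      intro x
      rcases eq_or_ne x a with rfl | hxa
      · rw [hMa]; linarith
      rcases eq_or_ne x b with rfl | hxb
      · rw [hMb]; linarith
      · rw [hMo x hxa hxb]; exact h1 x
    have hsubP : (Finset.univ.filter (fun x => μP x ≠ 0 ∧ μP x ≠ 1)) ⊂ F := by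
      rw [Finset.ssubset_iff_subset_ne]
      constructor
      · intro x hx
        rw [Finset.mem_filter] at hx ⊢
        refine ⟨Finset.mem_univ x, ?_⟩
        rcases eq_or_ne x a with rfl | hxa
        · exact haf
        rcases eq_or_ne x b with rfl | hxb
        · exact hbf
        · rw [hPo x hxa hxb] at hx; exact hx.2
      · intro hEq
        rcases le_or_gt (1 - μ a) (μ b) with hc | hc
        · have hmem : a ∈ Finset.univ.filter (fun x => μP x ≠ 0 ∧ μP x ≠ 1) := hEq ▸ ha
          rw [Finset.mem_filter] at hmem
          exact hmem.2.2 (by rw [hPa, hε₁, min_eq_left hc]; ring)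
        · have hmem : b ∈ Finset.univ.filter (fun x => μP x ≠ 0 ∧ μP x ≠ 1) := hEq ▸ hbF
          rw [Finset.mem_filter] at hmem
          exact hmem.2.1 (by rw [hPb, hε₁, min_eq_right hc.le]; ring)
    have hsubM : (Finset.univ.filter (fun x => μM x ≠ 0 ∧ μM x ≠ 1)) ⊂ F := by
      rw [Finset.ssubset_iff_subset_ne]
      constructor
      · intro x hx
        rw [Finset.mem_filter] at hx ⊢
        refine ⟨Finset.mem_univ x, ?_⟩
        rcases eq_or_ne x a with rfl | hxa
        · exact haf
        rcases eq_or_ne x b with rfl | hxb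
        · exact hbf
        · rw [hMo x hxa hxb] at hx; exact hx.2
      · intro hEq
        rcases le_or_gt (μ a) (1 - μ b) with hc | hc
        · have hmem : a ∈ Finset.univ.filter (fun x => μM x ≠ 0 ∧ μM x ≠ 1) := hEq ▸ ha
          rw [Finset.mem_filter] at hmem
          exact hmem.2.1 (by rw [hMa, hε₂, min_eq_left hc]; ring)
        · have hmem : b ∈ Finset.univ.filter (fun x => μM x ≠ 0 ∧ μM x ≠ 1) := hEq ▸ hbF
          rw [Finset.mem_filter] at hmem
          exact hmem.2.2 (by rw [hMb, hε₂, min_eq_right hc.le]; ring)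
    have hkP : (Finset.univ.filter (fun x => μP x ≠ 0 ∧ μP x ≠ 1)).card ≤ k := by
      have h1 := Finset.card_lt_card hsubP; omega
    have hkM : (Finset.univ.filter (fun x => μM x ≠ 0 ∧ μM x ≠ 1)).card ≤ k := by
      have h1 := Finset.card_lt_card hsubM; omega
    have hdP := ih μP hkP h0P h1P hsumP
    have hdM := ih μM hkM h0M h1M hsumM
    have hε : 0 < ε₁ + ε₂ := by linarith
    apply decomp_combine (w₁ := ε₂ / (ε₁ + ε₂)) (w₂ := ε₁ / (ε₁ + ε₂))
      (div_nonneg hε₂0.le hε.le) (div_nonneg hε₁0.le hε.le)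
      (by rw [← add_div, add_comm ε₂ ε₁, div_self hε.ne']) _ hdP hdM
    intro x
    rcases eq_or_ne x a with rfl | hxa
    · rw [hPa, hMa]; field_simp; ring
    rcases eq_or_ne x b with rfl | hxb
    · rw [hPb, hMb]; field_simp; ring
    · rw [hPo x hxa hxb, hMo x hxa hxb]; field_simp; ring

lemma decomp {n N : ℕ} (μ : Fin n → ℝ)
    (h0 : ∀ m, 0 ≤ μ m) (h1 : ∀ m, μ m ≤ 1) (hsum : ∑ m, μ m = (N : ℝ)) :
    ∃ (T : ℕ) (p : Fin T → ℝ) (S : Fin T → Finset (Fin n)),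
      (∀ t, 0 ≤ p t) ∧ (∑ t, p t = 1) ∧ (∀ t, (S t).card = N) ∧
      (∀ m, ∑ t, p t * (if m ∈ S t then (1:ℝ) else 0) = μ m) :=
  decomp_main _ μ le_rfl h0 h1 hsum


noncomputable def phN (n : ℕ) (i b : ℕ) : ℂ :=
  Complex.exp (((2 * Real.pi * i * b / n : ℝ) : ℂ) * Complex.I)

lemma phN_mul_conj (n : ℕ) (i b : ℕ) :
    phN n i b * (starRingEnd ℂ) (phN n i b) = 1 := by
  rw [phN, ← Complex.exp_conj, map_mul, Complex.conj_I, Complex.conj_ofReal,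
    ← Complex.exp_add]
  ring_nf
  exact Complex.exp_zero

lemma phN_conj_mul (n : ℕ) (hn : n ≠ 0) (i i' b : ℕ) :
    phN n i b * (starRingEnd ℂ) (phN n i' b) =
      Complex.exp (((2 * Real.pi * ((i : ℝ) - (i' : ℝ)) / n : ℝ) : ℂ) * Complex.I) ^ b := by
  rw [phN, phN, ← Complex.exp_conj, map_mul, Complex.conj_I, Complex.conj_ofReal,
    ← Complex.exp_add, ← Complex.exp_nat_mul]
  congr 1
  have hn' : (n : ℂ) ≠ 0 := Nat.cast_ne_zero.mpr hn
  push_cast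
  field_simp
  ring
lemma fourier_orth {n : ℕ} (hn : 0 < n) (i i' : Fin n) :
    ∑ b : Fin n, phN n i b * (starRingEnd ℂ) (phN n i' b) =
      if i = i' then (n : ℂ) else 0 := by
  have hsum : ∑ b : Fin n, phN n i b * (starRingEnd ℂ) (phN n i' b)
      = ∑ b ∈ Finset.range n,
        Complex.exp (((2 * Real.pi * ((i : ℝ) - (i' : ℝ)) / n : ℝ) : ℂ) * Complex.I) ^ b := by
    rw [← Fin.sum_univ_eq_sum_range]
    exact Finset.sum_congr rfl fun b _ => phN_conj_mul n hn.ne' i i' b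
  rw [hsum]
  set ζ := Complex.exp (((2 * Real.pi * ((i : ℝ) - (i' : ℝ)) / n : ℝ) : ℂ) * Complex.I) with hζ
  by_cases h : i = i'
  · subst h
    have : ζ = 1 := by rw [hζ]; norm_num
    simp [this]
  · rw [if_neg h]
    have hζn : ζ ^ n = 1 := by
      rw [hζ, ← Complex.exp_nat_mul]
      have harg : ((n : ℂ)) * (((2 * Real.pi * ((i : ℝ) - (i' : ℝ)) / n : ℝ) : ℂ) * Complex.I)
          = (((i : ℤ) - (i' : ℤ) : ℤ) : ℂ) * (2 * (Real.pi : ℂ) * Complex.I) := by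
        have hn' : (n : ℂ) ≠ 0 := Nat.cast_ne_zero.mpr hn.ne'
        push_cast
        field_simp
      rw [harg, Complex.exp_int_mul_two_pi_mul_I]
    have hζ1 : ζ ≠ 1 := by
      intro hone
      rw [hζ, Complex.exp_eq_one_iff] at hone
      obtain ⟨m, hm⟩ := hone
      have hπI : (2 * (Real.pi : ℂ) * Complex.I) ≠ 0 := by
        simp [Real.pi_ne_zero, Complex.I_ne_zero]
      have hx : (((i : ℝ) - (i' : ℝ)) / n : ℝ) = (m : ℝ) := by
        have h1 : ((((i : ℝ) - (i' : ℝ)) / n : ℝ) : ℂ) * (2 * (Real.pi : ℂ) * Complex.I)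
            = (m : ℂ) * (2 * (Real.pi : ℂ) * Complex.I) := by
          rw [← hm]
          have hn' : (n : ℂ) ≠ 0 := Nat.cast_ne_zero.mpr hn.ne'
          push_cast
          field_simp
        have h2 := mul_right_cancel₀ hπI h1
        exact_mod_cast h2
      have hx2 : (i : ℝ) - (i' : ℝ) = (m : ℝ) * n := by
        have hn0 : (n : ℝ) ≠ 0 := Nat.cast_ne_zero.mpr hn.ne'
        field_simp at hx
        linarith [hx]
      have hz : (i : ℤ) - (i' : ℤ) = m * n := by exact_mod_cast hx2
      have hi := i.isLt
      have hi' := i'.isLt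
      have hne : (i : ℕ) ≠ (i' : ℕ) := fun hc => h (Fin.ext hc)
      have hne' : (i : ℤ) ≠ (i' : ℤ) := by exact_mod_cast hne
      -- |i - i'| < n but i - i' = m * n ≠ 0
      rcases lt_trichotomy m 0 with hm0 | hm0 | hm0
      · nlinarith [hz, hi, hi', Int.ofNat_lt.mpr hi]
      · simp [hm0] at hz; omega
      · have : (1 : ℤ) ≤ m := hm0
        have hnn : (n : ℤ) ≤ m * n := le_mul_of_one_le_left (by positivity) this
        omega
    rw [geom_sum_eq hζ1, hζn]
    simp

noncomputable def rhoA {dA dB dC : ℕ} (ψ : Fin dA × Fin dB × Fin dC → ℂ) :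
    Matrix (Fin dA) (Fin dA) ℂ :=
  Matrix.of fun i i' => ∑ j : Fin dB, ∑ k : Fin dC,
    ψ (i, j, k) * (starRingEnd ℂ) (ψ (i', j, k))

noncomputable def rhoC {dA dB dC : ℕ} (ψ : Fin dA × Fin dB × Fin dC → ℂ) :
    Matrix (Fin dC) (Fin dC) ℂ :=
  Matrix.of fun k k' => ∑ i : Fin dA, ∑ j : Fin dB,
    ψ (i, j, k) * (starRingEnd ℂ) (ψ (i, j, k'))

noncomputable def rhoAC {dA dB dC : ℕ} (ψ : Fin dA × Fin dB × Fin dC → ℂ) :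
    Matrix (Fin dA × Fin dC) (Fin dA × Fin dC) ℂ :=
  Matrix.of fun p q => ∑ j : Fin dB, ψ (p.1, j, p.2) * (starRingEnd ℂ) (ψ (q.1, j, q.2))

noncomputable def probB {dA dB dC : ℕ} (ψ : Fin dA × Fin dB × Fin dC → ℂ) (j : Fin dB) : ℝ :=
  ∑ i : Fin dA, ∑ k : Fin dC, Complex.normSq (ψ (i, j, k))

noncomputable def rhoAPost {dA dB dC : ℕ} (ψ : Fin dA × Fin dB × Fin dC → ℂ) (j : Fin dB) :
    Matrix (Fin dA) (Fin dA) ℂ :=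
  Matrix.of fun i i' => (probB ψ j : ℂ)⁻¹ *
    ∑ k : Fin dC, ψ (i, j, k) * (starRingEnd ℂ) (ψ (i', j, k))

def Normalized {dA dB dC : ℕ} (ψ : Fin dA × Fin dB × Fin dC → ℂ) : Prop :=
  ∑ i : Fin dA, ∑ j : Fin dB, ∑ k : Fin dC, Complex.normSq (ψ (i, j, k)) = 1

/-- Given a density matrix `ρC` whose eigenvalue sequence is majorized by
`(1/d_A, …, 1/d_A, 0, …)` (equivalently, the eigenvalue sum over any index set `s` is at
most `min |s| d_A / d_A`), there is a tripartite pure state realizing `ρC` on `C`, the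
maximally mixed state on `A`, factorized `ρ_AC`, and unchanged `ρ_A` after any measurement
outcome on `B`. -/
theorem stmt2 (dA dC : ℕ) (hdA : 0 < dA) (ρC : Matrix (Fin dC) (Fin dC) ℂ)
    (hC : ρC.PosSemidef) (htr : ρC.trace = 1)
    (hmaj : ∀ s : Finset (Fin dC), ∑ k ∈ s, hC.1.eigenvalues k ≤ (min s.card dA : ℝ) / dA) :
    ∃ (dB : ℕ) (ψ : Fin dA × Fin dB × Fin dC → ℂ),
      Normalized ψ ∧
      rhoC ψ = ρC ∧
      rhoA ψ = (dA : ℂ)⁻¹ • (1 : Matrix (Fin dA) (Fin dA) ℂ) ∧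
      rhoAC ψ = rhoA ψ ⊗ₖ rhoC ψ ∧
      ∀ j : Fin dB, 0 < probB ψ j → rhoAPost ψ j = rhoA ψ := by
  classical
  haveI : NeZero dA := ⟨hdA.ne'⟩
  have hdAR : (0:ℝ) < (dA:ℝ) := by exact_mod_cast hdA
  have hdAC : (dA:ℂ) ≠ 0 := Nat.cast_ne_zero.mpr hdA.ne'
  set lam : Fin dC → ℝ := hC.1.eigenvalues with hlam
  set U : Matrix (Fin dC) (Fin dC) ℂ := (hC.1.eigenvectorUnitary : Matrix (Fin dC) (Fin dC) ℂ)
    with hUdef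
  -- spectral decomposition, entrywise
  have hspec : ∀ k k' : Fin dC,
      ρC k k' = ∑ m, (lam m : ℂ) * (U k m * (starRingEnd ℂ) (U k' m)) := by
    intro k k'
    conv_lhs => rw [hC.1.spectral_theorem, Unitary.conjStarAlgAut_apply]
    rw [Matrix.mul_apply]
    refine Finset.sum_congr rfl fun m _ => ?_
    rw [Matrix.mul_diagonal, Matrix.star_apply]
    show U k m * (RCLike.ofReal (lam m)) * star (U k' m) = _
    rw [RCLike.star_def]
    have hco : (RCLike.ofReal (lam m) : ℂ) = ((lam m : ℝ) : ℂ) := rfl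
    rw [hco]; ring
  -- column orthonormality
  have hUorth : ∀ m m' : Fin dC,
      ∑ k, U k m * (starRingEnd ℂ) (U k m') = if m' = m then 1 else 0 := by
    intro m m'
    have h1 : star U * U = 1 :=
      Matrix.mem_unitaryGroup_iff'.mp (hC.1.eigenvectorUnitary).2
    have h2 := congrFun (congrFun h1 m') m
    rw [Matrix.mul_apply, Matrix.one_apply] at h2
    rw [← h2]
    refine Finset.sum_congr rfl fun k _ => ?_
    rw [Matrix.star_apply, RCLike.star_def]
    ring
  have hlam0 : ∀ m, 0 ≤ lam m := fun m => hC.eigenvalues_nonneg m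
  have htr' : ∑ k, ρC k k = 1 := by rw [← htr]; rfl
  have hlamsum : ∑ m, lam m = 1 := by
    have h2 : ((∑ m, lam m : ℝ) : ℂ) = 1 := by
      push_cast
      rw [← htr']
      rw [Finset.sum_congr rfl fun k (_ : k ∈ Finset.univ) => hspec k k, Finset.sum_comm]
      refine Finset.sum_congr rfl fun m _ => ?_
      rw [← Finset.mul_sum, hUorth m m, if_pos rfl, mul_one]
    exact_mod_cast h2
  have hlam1 : ∀ m, lam m ≤ 1 / dA := by
    intro m
    have h := hmaj {m}
    simp only [Finset.sum_singleton, Finset.card_singleton] at h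
    have h1le : (1:ℝ) ≤ (dA:ℝ) := by exact_mod_cast hdA
    rwa [Nat.cast_one, min_eq_left h1le] at h
  -- decomposition of dA * lam into uniform distributions on dA-subsets
  obtain ⟨T, p, S, hp0, hp1, hScard, hdec⟩ := decomp (N := dA) (fun m => (dA:ℝ) * lam m)
    (fun m => mul_nonneg hdAR.le (hlam0 m))
    (fun m => by
      have h := hlam1 m
      calc (dA:ℝ) * lam m ≤ (dA:ℝ) * (1/dA) := mul_le_mul_of_nonneg_left h hdAR.le
        _ = 1 := by field_simp)
    (by rw [← Finset.mul_sum, hlamsum, mul_one])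
  -- injections from the subsets
  set σ : Fin T → Fin dA → Fin dC := fun t i => ((S t).orderIsoOfFin (hScard t) i : Fin dC)
    with hσdef
  have hσinj : ∀ t, Function.Injective (σ t) := by
    intro t i i' h
    exact ((S t).orderIsoOfFin (hScard t)).toEquiv.injective (Subtype.ext h)
  have hσsum : ∀ (t : Fin T) (g : Fin dC → ℂ),
      ∑ c : Fin dA, g (σ t c) = ∑ m ∈ S t, g m := by
    intro t g
    calc ∑ c : Fin dA, g (σ t c)
        = ∑ x : {x // x ∈ S t}, g ↑x :=
          Equiv.sum_comp ((S t).orderIsoOfFin (hScard t)).toEquiv (fun x => g ↑x)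
      _ = ∑ m ∈ S t, g m := Finset.sum_coe_sort (S t) g
  -- build the state
  set dB := T * (dA * dA) with hdB
  set e : (Fin T × Fin dA × Fin dA) ≃ Fin dB :=
    (Equiv.prodCongr (Equiv.refl (Fin T)) finProdFinEquiv).trans finProdFinEquiv with he
  set κ : Fin T → ℝ := fun t => Real.sqrt (p t / (dA:ℝ)^3) with hκdef
  have hκ : ∀ t, (κ t : ℂ) * (starRingEnd ℂ) (κ t : ℂ) = ((p t / (dA:ℝ)^3 : ℝ) : ℂ) := by
    intro t
    rw [Complex.conj_ofReal, ← Complex.ofReal_mul, hκdef,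
      Real.mul_self_sqrt (div_nonneg (hp0 t) (by positivity))]
  set ψ : Fin dA × Fin dB × Fin dC → ℂ := fun q =>
    (κ (e.symm q.2.1).1 : ℂ) * phN dA q.1 (e.symm q.2.1).2.2 *
      U q.2.2 (σ (e.symm q.2.1).1 (q.1 + (e.symm q.2.1).2.1)) with hψdef
  have hψ : ∀ (t : Fin T) (c b : Fin dA) (i : Fin dA) (k : Fin dC),
      ψ (i, e (t, c, b), k) = (κ t : ℂ) * phN dA i b * U k (σ t (i + c)) := by
    intro t c b i k
    simp only [hψdef, Equiv.symm_apply_apply]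
  -- per-outcome inner products over C
  have hK : ∀ (t : Fin T) (c b : Fin dA) (i i' : Fin dA),
      ∑ k : Fin dC, ψ (i, e (t,c,b), k) * (starRingEnd ℂ) (ψ (i', e (t,c,b), k)) =
        if i = i' then ((p t / (dA:ℝ)^3 : ℝ) : ℂ) else 0 := by
    intro t c b i i'
    have hterm : ∀ k, ψ (i, e (t,c,b), k) * (starRingEnd ℂ) (ψ (i', e (t,c,b), k)) =
        ((κ t : ℂ) * (starRingEnd ℂ) (κ t : ℂ)) *
          ((phN dA i b * (starRingEnd ℂ) (phN dA i' b)) *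
            (U k (σ t (i + c)) * (starRingEnd ℂ) (U k (σ t (i' + c))))) := by
      intro k
      rw [hψ t c b i k, hψ t c b i' k]
      simp only [map_mul]
      ring
    rw [Finset.sum_congr rfl fun k _ => hterm k, ← Finset.mul_sum, ← Finset.mul_sum,
      hUorth]
    by_cases h : i = i'
    · subst h
      simp [hκ, phN_mul_conj]
      rw [← Complex.ofReal_mul, hκdef, Real.mul_self_sqrt (div_nonneg (hp0 t) (by positivity))]
      push_cast
      ring
    · have hne : σ t (i' + c) ≠ σ t (i + c) := by
        intro hc
        exact h (add_right_cancel (hσinj t hc)).symm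
      rw [if_neg hne, if_neg h, mul_zero, mul_zero]
  -- the master computation
  have hmaster : ∀ (i i' : Fin dA) (k k' : Fin dC),
      ∑ j : Fin dB, ψ (i, j, k) * (starRingEnd ℂ) (ψ (i', j, k')) =
        if i = i' then ρC k k' * (dA:ℂ)⁻¹ else 0 := by
    intro i i' k k'
    rw [← Equiv.sum_comp e (fun j => ψ (i, j, k) * (starRingEnd ℂ) (ψ (i', j, k')))]
    rw [Fintype.sum_prod_type]
    have hbsum : ∀ (t : Fin T) (q : Fin dA × Fin dA),
        ψ (i, e (t, q), k) * (starRingEnd ℂ) (ψ (i', e (t, q), k')) =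
        ((κ t : ℂ) * (starRingEnd ℂ) (κ t : ℂ)) *
          ((phN dA i q.2 * (starRingEnd ℂ) (phN dA i' q.2)) *
            (U k (σ t (i + q.1)) * (starRingEnd ℂ) (U k' (σ t (i' + q.1))))) := by
      intro t q
      rw [hψ t q.1 q.2 i k, hψ t q.1 q.2 i' k']
      simp only [map_mul]
      ring
    simp only [hbsum, hκ]
    have hsplit : ∀ t : Fin T,
        ∑ q : Fin dA × Fin dA,
          ((p t / (dA:ℝ)^3 : ℝ) : ℂ) *
            ((phN dA i q.2 * (starRingEnd ℂ) (phN dA i' q.2)) *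
              (U k (σ t (i + q.1)) * (starRingEnd ℂ) (U k' (σ t (i' + q.1))))) =
        ((p t / (dA:ℝ)^3 : ℝ) : ℂ) * ((if i = i' then (dA:ℂ) else 0) *
          ∑ c : Fin dA, (U k (σ t (i + c)) * (starRingEnd ℂ) (U k' (σ t (i' + c))))) := by
      intro t
      rw [Fintype.sum_prod_type]
      have hc1 : ∀ c : Fin dA,
          ∑ b : Fin dA, ((p t / (dA:ℝ)^3 : ℝ) : ℂ) *
            ((phN dA i b * (starRingEnd ℂ) (phN dA i' b)) *
              (U k (σ t (i + c)) * (starRingEnd ℂ) (U k' (σ t (i' + c))))) =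
          ((p t / (dA:ℝ)^3 : ℝ) : ℂ) * ((if i = i' then (dA:ℂ) else 0) *
            (U k (σ t (i + c)) * (starRingEnd ℂ) (U k' (σ t (i' + c))))) := by
        intro c
        rw [← Finset.mul_sum]
        congr 1
        rw [← Finset.sum_mul, fourier_orth hdA i i']
      rw [Finset.sum_congr rfl fun c _ => hc1 c, ← Finset.mul_sum, ← Finset.mul_sum]
    rw [Finset.sum_congr rfl fun t _ => hsplit t]
    by_cases h : i = i'
    · subst h
      simp only [if_pos rfl]
      have hcent : ∑ t, (p t : ℂ) *
          (∑ c : Fin dA, (U k (σ t (i + c)) * (starRingEnd ℂ) (U k' (σ t (i + c))))) =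
          (dA:ℂ) * ρC k k' := by
        have hshift : ∀ t : Fin T, ∑ c : Fin dA,
            (U k (σ t (i + c)) * (starRingEnd ℂ) (U k' (σ t (i + c)))) =
            ∑ m ∈ S t, U k m * (starRingEnd ℂ) (U k' m) := by
          intro t
          rw [← hσsum t (fun m => U k m * (starRingEnd ℂ) (U k' m))]
          exact Equiv.sum_comp (Equiv.addLeft i)
            (fun c => U k (σ t c) * (starRingEnd ℂ) (U k' (σ t c)))
        simp only [hshift]
        have hresum : ∀ t, (p t : ℂ) * ∑ m ∈ S t, U k m * (starRingEnd ℂ) (U k' m) =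
            ∑ m, ((p t * (if m ∈ S t then (1:ℝ) else 0) : ℝ) : ℂ) *
              (U k m * (starRingEnd ℂ) (U k' m)) := by
          intro t
          rw [Finset.mul_sum]
          rw [show ∑ m ∈ S t, (p t : ℂ) * (U k m * (starRingEnd ℂ) (U k' m)) =
              ∑ m, if m ∈ S t then (p t : ℂ) * (U k m * (starRingEnd ℂ) (U k' m)) else 0 by
            rw [Finset.sum_ite_mem, Finset.univ_inter]]
          refine Finset.sum_congr rfl fun m _ => ?_
          split_ifs with hm
          · push_cast; ring
          · push_cast; ring
        simp only [hresum]
        rw [Finset.sum_comm]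
        have hcol : ∀ m : Fin dC, ∑ t, ((p t * (if m ∈ S t then (1:ℝ) else 0) : ℝ) : ℂ) *
            (U k m * (starRingEnd ℂ) (U k' m)) =
            (((dA:ℝ) * lam m : ℝ) : ℂ) * (U k m * (starRingEnd ℂ) (U k' m)) := by
          intro m
          rw [← Finset.sum_mul]
          congr 1
          rw [← Complex.ofReal_sum]
          exact congrArg Complex.ofReal (hdec m)
        rw [Finset.sum_congr rfl fun m _ => hcol m]
        rw [hspec k k', Finset.mul_sum]
        refine Finset.sum_congr rfl fun m _ => ?_
        push_cast
        ring
      calc ∑ t, ((p t / (dA:ℝ)^3 : ℝ) : ℂ) * ((dA:ℂ) *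
            ∑ c : Fin dA, (U k (σ t (i + c)) * (starRingEnd ℂ) (U k' (σ t (i + c))))) =
          ((dA:ℂ)^2)⁻¹ * ∑ t, (p t : ℂ) *
            (∑ c : Fin dA, (U k (σ t (i + c)) * (starRingEnd ℂ) (U k' (σ t (i + c))))) := by
            rw [Finset.mul_sum]
            refine Finset.sum_congr rfl fun t _ => ?_
            push_cast
            field_simp
        _ = ((dA:ℂ)^2)⁻¹ * ((dA:ℂ) * ρC k k') := by rw [hcent]
        _ = ρC k k' * (dA:ℂ)⁻¹ := by
            rw [pow_two]
            field_simp
    · simp only [if_neg h]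
      simp
  -- entrywise values of the reduced density matrices
  have hrhoAe : ∀ i i' : Fin dA, rhoA ψ i i' = if i = i' then (dA:ℂ)⁻¹ else 0 := by
    intro i i'
    show (∑ j : Fin dB, ∑ k : Fin dC, ψ (i, j, k) * (starRingEnd ℂ) (ψ (i', j, k))) = _
    rw [Finset.sum_comm]
    rw [Finset.sum_congr rfl fun k (_ : k ∈ Finset.univ) => hmaster i i' k k]
    by_cases h : i = i'
    · simp only [if_pos h]
      rw [← Finset.sum_mul, htr', one_mul]
    · simp only [if_neg h, Finset.sum_const_zero]
  have hrhoCe : ∀ k k' : Fin dC, rhoC ψ k k' = ρC k k' := by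
    intro k k'
    show (∑ i : Fin dA, ∑ j : Fin dB, ψ (i, j, k) * (starRingEnd ℂ) (ψ (i, j, k'))) = _
    rw [Finset.sum_congr rfl fun i (_ : i ∈ Finset.univ) => by
      rw [hmaster i i k k', if_pos rfl]]
    rw [Finset.sum_const, Finset.card_univ, Fintype.card_fin, nsmul_eq_mul]
    field_simp
  -- probability of each outcome
  have hprob : ∀ (t : Fin T) (c b : Fin dA),
      probB ψ (e (t,c,b)) = p t / (dA:ℝ)^2 := by
    intro t c b
    have h1 : ((probB ψ (e (t,c,b)) : ℝ) : ℂ) = ((p t / (dA:ℝ)^2 : ℝ) : ℂ) := by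
      show ((∑ i : Fin dA, ∑ k : Fin dC, Complex.normSq (ψ (i, e (t,c,b), k)) : ℝ) : ℂ) = _
      push_cast
      rw [Finset.sum_congr rfl fun i (_ : i ∈ Finset.univ) =>
        Finset.sum_congr rfl fun k (_ : k ∈ Finset.univ) => (Complex.mul_conj _).symm]
      rw [Finset.sum_congr rfl fun i (_ : i ∈ Finset.univ) => by
        rw [hK t c b i i, if_pos rfl]]
      rw [Finset.sum_const, Finset.card_univ, Fintype.card_fin, nsmul_eq_mul]
      push_cast
      rw [pow_two, pow_succ, pow_two]
      field_simp
    exact_mod_cast h1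
  -- conclusions
  refine ⟨dB, ψ, ?_, ?_, ?_, ?_, ?_⟩
  · -- Normalized
    have h2 : ((∑ i : Fin dA, ∑ j : Fin dB, ∑ k : Fin dC, Complex.normSq (ψ (i, j, k)) : ℝ) : ℂ)
        = 1 := by
      push_cast
      rw [Finset.sum_congr rfl fun i (_ : i ∈ Finset.univ) =>
        Finset.sum_congr rfl fun j (_ : j ∈ Finset.univ) =>
          Finset.sum_congr rfl fun k (_ : k ∈ Finset.univ) => (Complex.mul_conj _).symm]
      have hdiag : ∀ i : Fin dA,
          (∑ j : Fin dB, ∑ k : Fin dC, ψ (i, j, k) * (starRingEnd ℂ) (ψ (i, j, k)))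
            = (dA:ℂ)⁻¹ := by
        intro i
        have hh := hrhoAe i i
        rw [if_pos rfl] at hh
        exact hh
      rw [Finset.sum_congr rfl fun i (_ : i ∈ Finset.univ) => hdiag i]
      rw [Finset.sum_const, Finset.card_univ, Fintype.card_fin, nsmul_eq_mul]
      field_simp
    exact_mod_cast h2
  · -- rhoC
    ext k k'
    exact hrhoCe k k'
  · -- rhoA
    ext i i'
    rw [hrhoAe i i', Matrix.smul_apply, Matrix.one_apply, smul_eq_mul]
    by_cases h : i = i'
    · simp [h]
    · simp [h]
  · -- rhoAC
    ext x y
    obtain ⟨i, k⟩ := x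
    obtain ⟨i', k'⟩ := y
    show (∑ j : Fin dB, ψ (i, j, k) * (starRingEnd ℂ) (ψ (i', j, k'))) = _
    rw [hmaster i i' k k', Matrix.kroneckerMap_apply]
    show _ = rhoA ψ i i' * rhoC ψ k k'
    rw [hrhoAe i i', hrhoCe k k']
    by_cases h : i = i'
    · simp only [if_pos h]; ring
    · simp only [if_neg h, zero_mul]
  · -- post-measurement
    intro j hj
    obtain ⟨⟨t, c, b⟩, rfl⟩ : ∃ q : Fin T × Fin dA × Fin dA, e q = j :=
      ⟨e.symm j, e.apply_symm_apply j⟩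
    rw [hprob t c b] at hj
    have hpt : 0 < p t := by
      by_contra hle
      push_neg at hle
      have hd2 : (0:ℝ) < (dA:ℝ)^2 := by positivity
      have := div_nonpos_of_nonpos_of_nonneg hle hd2.le
      linarith
    have hptC : (p t : ℂ) ≠ 0 := Complex.ofReal_ne_zero.mpr hpt.ne'
    ext i i'
    show (probB ψ (e (t,c,b)) : ℂ)⁻¹ *
      (∑ k : Fin dC, ψ (i, e (t,c,b), k) * (starRingEnd ℂ) (ψ (i', e (t,c,b), k)))
      = rhoA ψ i i'
    rw [hprob t c b, hK t c b i i', hrhoAe i i']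
    by_cases h : i = i'
    · rw [if_pos h, if_pos h]
      push_cast
      rw [pow_two, pow_succ, pow_two]
      field_simp
    · rw [if_neg h, if_neg h, mul_zero]
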